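/- The derivations ℒ₁ and ℒ₃ of ℂ[x₂,x₃,x₄,z₄,z₅,z₆] commute, i.e. ℒ₁(ℒ₃P) = ℒ₃(ℒ₁P) for every polynomial P, and both annihilate the four polynomials λ̂₄, λ̂₆, λ̂₈, λ̂₁₀: ℒ₁ λ̂ₖ = 0 and ℒ₃ λ̂ₖ = 0 for k = 4, 6, 8, 10. -/

import Mathlib

open MvPolynomial

noncomputable section

/-- The polynomial ring ℂ[x₂,x₃,x₄,z₄,z₅,z₆];
`X 0 = x₂`, `X 1 = x₃`, `X 2 = x₄`, `X 3 = z₄`, `X 4 = z₅`, `X 5 = z₆`. -/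
abbrev R6 : Type := MvPolynomial (Fin 6) ℂ

def x2 : R6 := X 0
def x3 : R6 := X 1
def x4 : R6 := X 2
def z4 : R6 := X 3
def z5 : R6 := X 4
def z6 : R6 := X 5

/-- P₅ = 4(3x₂x₃ + z₅) -/
def P5 : R6 := 4 * (3 * x2 * x3 + z5)
/-- P₇ = 4(2x₂z₅ + x₃z₄) -/
def P7 : R6 := 4 * (2 * x2 * z5 + x3 * z4)
/-- G₆' = x₃z₄ − x₂z₅ -/
def G6' : R6 := x3 * z4 - x2 * z5
/-- G₆'' = x₄z₄ − x₂z₆ -/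
def G6'' : R6 := x4 * z4 - x2 * z6
/-- G₆''' = 8x₂(x₃z₄ − x₂z₅) + (x₄z₅ − x₃z₆) + 4z₄z₅ -/
def G6''' : R6 := 8 * x2 * (x3 * z4 - x2 * z5) + (x4 * z5 - x3 * z6) + 4 * z4 * z5

/-- ℒ₁ = x₃∂/∂x₂ + x₄∂/∂x₃ + P₅∂/∂x₄ + z₅∂/∂z₄ + z₆∂/∂z₅ + P₇∂/∂z₆ -/
def L1 (P : R6) : R6 :=
  x3 * pderiv (0 : Fin 6) P + x4 * pderiv (1 : Fin 6) P + P5 * pderiv (2 : Fin 6) P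
    + z5 * pderiv (3 : Fin 6) P + z6 * pderiv (4 : Fin 6) P + P7 * pderiv (5 : Fin 6) P

/-- ℒ₃ = z₅∂/∂x₂ + z₆∂/∂x₃ + P₇∂/∂x₄ + G₆'∂/∂z₄ + G₆''∂/∂z₅ + G₆'''∂/∂z₆ -/
def L3 (P : R6) : R6 :=
  z5 * pderiv (0 : Fin 6) P + z6 * pderiv (1 : Fin 6) P + P7 * pderiv (2 : Fin 6) P
    + G6' * pderiv (3 : Fin 6) P + G6'' * pderiv (4 : Fin 6) P + G6''' * pderiv (5 : Fin 6) P

/-- λ̂₄ = ½(x₄ − 6x₂² − 4z₄) -/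
def lam4 : R6 := C (1/2 : ℂ) * (x4 - 6 * x2 ^ 2 - 4 * z4)
/-- λ̂₆ = −¼(2x₂(x₄ + 4z₄) − 8x₂³ − x₃² − 2z₆) -/
def lam6 : R6 := -C (1/4 : ℂ) * (2 * x2 * (x4 + 4 * z4) - 8 * x2 ^ 3 - x3 ^ 2 - 2 * z6)
/-- λ̂₈ = −½(x₂z₆ + x₄z₄ − 8x₂²z₄ − 2z₄² − x₃z₅) -/
def lam8 : R6 :=
  -C (1/2 : ℂ) * (x2 * z6 + x4 * z4 - 8 * x2 ^ 2 * z4 - 2 * z4 ^ 2 - x3 * z5)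
/-- λ̂₁₀ = ¼(8x₂z₄² − 2z₄z₆ + z₅²) -/
def lam10 : R6 := C (1/4 : ℂ) * (8 * x2 * z4 ^ 2 - 2 * z4 * z6 + z5 ^ 2)

@[simp] lemma pderiv_ofNat (i : Fin 6) (n : ℕ) [n.AtLeastTwo] :
    pderiv i (no_index (OfNat.ofNat n) : R6) = 0 := by
  have : (OfNat.ofNat n : R6) = C (OfNat.ofNat n : ℂ) := (map_ofNat C n).symm
  rw [this, pderiv_C]

/-- ℒ₁ as a bundled derivation. -/
def E1 : Derivation ℂ R6 R6 :=
  x3 • pderiv 0 + x4 • pderiv 1 + P5 • pderiv 2 + z5 • pderiv 3 + z6 • pderiv 4 + P7 • pderiv 5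

/-- ℒ₃ as a bundled derivation. -/
def E3 : Derivation ℂ R6 R6 :=
  z5 • pderiv 0 + z6 • pderiv 1 + P7 • pderiv 2 + G6' • pderiv 3 + G6'' • pderiv 4
    + G6''' • pderiv 5

lemma L1_eq (P : R6) : L1 P = E1 P := by
  simp [L1, E1, Derivation.add_apply, Derivation.coe_smul, Pi.smul_apply, smul_eq_mul]

lemma L3_eq (P : R6) : L3 P = E3 P := by
  simp [L3, E3, Derivation.add_apply, Derivation.coe_smul, Pi.smul_apply, smul_eq_mul]

set_option maxHeartbeats 2000000 in
lemma commutator_zero : ⁅E1, E3⁆ = 0 := by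
  apply MvPolynomial.derivation_ext
  intro i
  rw [Derivation.commutator_apply, Derivation.zero_apply, ← L3_eq, ← L1_eq, ← L3_eq, ← L1_eq]
  fin_cases i <;>
  · simp only [L1, L3, x2, x3, x4, z4, z5, z6, P5, P7, G6', G6'', G6''']
    simp [pderiv_mul, pderiv_pow, pderiv_X, pderiv_C]
    try ring

set_option maxHeartbeats 2000000 in
theorem L1_L3_commute_and_annihilate_lambdas :
    (∀ P : R6, L1 (L3 P) = L3 (L1 P)) ∧
    L1 lam4 = 0 ∧ L1 lam6 = 0 ∧ L1 lam8 = 0 ∧ L1 lam10 = 0 ∧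
    L3 lam4 = 0 ∧ L3 lam6 = 0 ∧ L3 lam8 = 0 ∧ L3 lam10 = 0 := by
  refine ⟨fun P => ?_, ?_, ?_, ?_, ?_, ?_, ?_, ?_, ?_⟩
  · have h := congrArg (fun D => Derivation.toLinearMap D P) commutator_zero
    simp only [Derivation.coeFn_coe, Derivation.commutator_apply, Derivation.zero_apply] at h
    rw [L3_eq P, L1_eq (E3 P), L1_eq P, L3_eq (E1 P)]
    exact sub_eq_zero.mp h
  all_goals
  · simp only [L1, L3, lam4, lam6, lam8, lam10, x2, x3, x4, z4, z5, z6, P5, P7, G6', G6'', G6''']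
    simp [pderiv_mul, pderiv_pow, pderiv_X, pderiv_C]
    ring

end
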